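/- arXiv:2312.15847 — 4 statements merged into one kernel-verified Lean document; each statement's English description precedes it below -/
import Mathlib

section
/- Let ξ be a random vector in ℝⁿ on a probability space with E[ξ] = 0 and E[‖ξ‖^δ] ≤ ν^δ, where δ ∈ (1,2] and ν > 0. Let G ∈ ℝⁿ be a fixed vector with ‖G‖ ≤ C₀ for some C₀ ≥ 0, set g = G + ξ, and let τ be a real number with τ ≥ 2C₀ and τ > 0. Then the bias of the clipped vector satisfies ‖E[clip_τ(g)] − G‖ ≤ (2ν)^δ τ^{1−δ}. -/
open MeasureTheory

/-- The gradient clipping operator: `clip τ x = min {1, τ/‖x‖} • x` (which equals `x` when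
`x = 0`, since in Lean `τ / 0 = 0` and `(0 : ℝ) • (0 : _) = 0`). -/
noncomputable def clip {n : ℕ} (τ : ℝ) (x : EuclideanSpace ℝ (Fin n)) : EuclideanSpace ℝ (Fin n) :=
  min 1 (τ / ‖x‖) • x

lemma norm_clip_le {n : ℕ} {τ : ℝ} (hτ : 0 < τ) (x : EuclideanSpace ℝ (Fin n)) :
    ‖clip τ x‖ ≤ τ := by
  unfold clip
  rcases eq_or_ne x 0 with h | h
  · simp [h, hτ.le]
  · have hx : 0 < ‖x‖ := norm_pos_iff.mpr h
    rw [norm_smul, Real.norm_eq_abs]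
    have hmin : 0 ≤ min 1 (τ / ‖x‖) := le_min one_pos.le (div_nonneg hτ.le hx.le)
    rw [abs_of_nonneg hmin]
    calc min 1 (τ / ‖x‖) * ‖x‖ ≤ (τ / ‖x‖) * ‖x‖ :=
          mul_le_mul_of_nonneg_right (min_le_right _ _) hx.le
      _ = τ := div_mul_cancel₀ _ hx.ne'

lemma clip_bias_pointwise {n : ℕ} {δ τ C₀ : ℝ} (hδ1 : 1 < δ)
    (hτC : 2 * C₀ ≤ τ) (hτ : 0 < τ)
    (G x : EuclideanSpace ℝ (Fin n)) (hG : ‖G‖ ≤ C₀) :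
    ‖clip τ (G + x) - (G + x)‖ ≤ (2 * ‖x‖) ^ δ * τ ^ (1 - δ) := by
  set g := G + x with hg
  rcases le_or_gt ‖g‖ τ with h | h
  · have hclip : clip τ g = g := by
      unfold clip
      rcases eq_or_ne g 0 with hg0 | hg0
      · simp [hg0]
      · have hg' : 0 < ‖g‖ := norm_pos_iff.mpr hg0
        have h1 : (1 : ℝ) ≤ τ / ‖g‖ := (one_le_div hg').mpr h
        rw [min_eq_left h1, one_smul]
    rw [hclip, sub_self, norm_zero]
    positivity
  · have hg' : 0 < ‖g‖ := hτ.trans h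
    have hmin : min 1 (τ / ‖g‖) = τ / ‖g‖ :=
      min_eq_right ((div_le_one hg').mpr h.le)
    have hnorm : ‖clip τ g - g‖ = ‖g‖ - τ := by
      unfold clip
      rw [hmin]
      have : (τ / ‖g‖) • g - g = (τ / ‖g‖ - 1) • g := by
        rw [sub_smul, one_smul]
      rw [this, norm_smul, Real.norm_eq_abs]
      have hle : τ / ‖g‖ - 1 ≤ 0 := by
        have : τ / ‖g‖ ≤ 1 := (div_le_one hg').mpr h.le
        linarith
      rw [abs_of_nonpos hle]
      field_simp
      ring
    rw [hnorm]
    have hgx : ‖g‖ < 2 * ‖x‖ := by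
      have h1 : ‖g‖ ≤ C₀ + ‖x‖ := (norm_add_le G x).trans (add_le_add_left hG _)
      linarith
    have h2x : τ < 2 * ‖x‖ := h.trans hgx
    have h2x0 : 0 < 2 * ‖x‖ := hτ.trans h2x
    have key : (2 * ‖x‖) ≤ (2 * ‖x‖) ^ δ * τ ^ (1 - δ) := by
      have e1 : (2 * ‖x‖) = (2 * ‖x‖) ^ δ * (2 * ‖x‖) ^ (1 - δ) := by
        rw [← Real.rpow_add h2x0]
        norm_num
      have e2 : (2 * ‖x‖) ^ (1 - δ) ≤ τ ^ (1 - δ) :=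
        Real.rpow_le_rpow_of_nonpos hτ h2x.le (by linarith)
      calc (2 * ‖x‖) = (2 * ‖x‖) ^ δ * (2 * ‖x‖) ^ (1 - δ) := e1
        _ ≤ (2 * ‖x‖) ^ δ * τ ^ (1 - δ) :=
            mul_le_mul_of_nonneg_left e2 (Real.rpow_nonneg h2x0.le _)
    linarith

theorem stmt_3 {n : ℕ} {Ω : Type*} [MeasurableSpace Ω] (μ : Measure Ω) [IsProbabilityMeasure μ]
    (ξ : Ω → EuclideanSpace ℝ (Fin n)) (hmeas : AEStronglyMeasurable ξ μ)
    (hint : Integrable ξ μ) (hmean : ∫ ω, ξ ω ∂μ = 0)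
    (δ ν : ℝ) (hδ1 : 1 < δ) (hδ2 : δ ≤ 2) (hν : 0 < ν)
    (hmom_int : Integrable (fun ω => ‖ξ ω‖ ^ δ) μ)
    (hmom : ∫ ω, ‖ξ ω‖ ^ δ ∂μ ≤ ν ^ δ)
    (G : EuclideanSpace ℝ (Fin n)) (C₀ : ℝ) (hC₀ : 0 ≤ C₀) (hG : ‖G‖ ≤ C₀)
    (τ : ℝ) (hτC : 2 * C₀ ≤ τ) (hτ : 0 < τ) :
    ‖(∫ ω, clip τ (G + ξ ω) ∂μ) - G‖ ≤ (2 * ν) ^ δ * τ ^ (1 - δ) := by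
  have hgm : AEStronglyMeasurable (fun ω => G + ξ ω) μ := aestronglyMeasurable_const.add hmeas
  have hgint : Integrable (fun ω => G + ξ ω) μ := (integrable_const G).add hint
  have hclipmeas : AEStronglyMeasurable (fun ω => clip τ (G + ξ ω)) μ := by
    unfold clip
    have hs : AEMeasurable (fun ω => min 1 (τ / ‖G + ξ ω‖)) μ :=
      aemeasurable_const.min (aemeasurable_const.div hgm.norm.aemeasurable)
    exact hs.aestronglyMeasurable.smul hgm
  have hclipint : Integrable (fun ω => clip τ (G + ξ ω)) μ :=
    Integrable.mono' (integrable_const τ) hclipmeas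
      (ae_of_all _ fun ω => norm_clip_le hτ _)
  have key : (∫ ω, clip τ (G + ξ ω) ∂μ) - G
      = ∫ ω, (clip τ (G + ξ ω) - (G + ξ ω)) ∂μ := by
    rw [integral_sub hclipint hgint, integral_add (integrable_const G) hint, hmean,
      integral_const, probReal_univ, one_smul, add_zero]
  rw [key]
  have hbeq : (fun ω => (2 * ‖ξ ω‖) ^ δ * τ ^ (1 - δ))
      = fun ω => (2 ^ δ * τ ^ (1 - δ)) * ‖ξ ω‖ ^ δ := by
    funext ω
    rw [Real.mul_rpow two_pos.le (norm_nonneg _)]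
    ring
  have hbint : Integrable (fun ω => (2 * ‖ξ ω‖) ^ δ * τ ^ (1 - δ)) μ := by
    rw [hbeq]; exact hmom_int.const_mul _
  calc ‖∫ ω, (clip τ (G + ξ ω) - (G + ξ ω)) ∂μ‖
      ≤ ∫ ω, ‖clip τ (G + ξ ω) - (G + ξ ω)‖ ∂μ := norm_integral_le_integral_norm _
    _ ≤ ∫ ω, (2 * ‖ξ ω‖) ^ δ * τ ^ (1 - δ) ∂μ :=
        integral_mono (hclipint.sub hgint).norm hbint
          (fun ω => clip_bias_pointwise hδ1 hτC hτ G (ξ ω) hG)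
    _ = (2 ^ δ * τ ^ (1 - δ)) * ∫ ω, ‖ξ ω‖ ^ δ ∂μ := by
        rw [hbeq, integral_const_mul]
    _ ≤ (2 ^ δ * τ ^ (1 - δ)) * ν ^ δ := by
        apply mul_le_mul_of_nonneg_left hmom
        positivity
    _ = (2 * ν) ^ δ * τ ^ (1 - δ) := by
        rw [Real.mul_rpow two_pos.le hν.le]; ring
end

section
/- Let N > 1 and let A = (a_{ij}) be an N×N doubly stochastic matrix. Suppose there exists 0 < η < 1 such that a_{ii} ≥ η for every i and a_{ij} ≥ η whenever a_{ij} > 0, and suppose the directed graph on vertices {1,…,N} with edge set E = {(j,i) : i ≠ j, a_{ij} > 0} is strongly connected (i.e., for every ordered pair of distinct vertices there is a directed path from one to the other). Let Q = |E| be the number of edges. Then for every integer k > 0 and all indices i, j: |[A^k]_{ij} − 1/N| ≤ θ β^k, where θ = (1 − η/(4N²))^{−2} and β = (1 − η/(4N²))^{1/Q}. -/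
open Finset
open Finset

private lemma chain_concat' {α : Type*} {r : α → α → Prop} :
    ∀ (l : List α) (a b c : α), List.Chain r a l → l.getLast? = some b → r b c →
      List.Chain r a (l ++ [c])
  | [], a, b, c, _, hlast, _ => by simp at hlast
  | [w], a, b, c, hch, hlast, hbc => by
      simp at hlast
      subst hlast
      simp only [List.cons_append, List.nil_append]
      exact List.Chain.cons (List.chain_cons.mp hch).1 (List.isChain_pair.mpr hbc)
  | w :: u :: l'', a, b, c, hch, hlast, hbc => by
      rw [List.getLast?_cons_cons] at hlast
      rcases List.chain_cons.mp hch with ⟨haw, hch'⟩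
      simpa using List.Chain.cons haw (chain_concat' (u :: l'') w b c hch' hlast hbc)

private lemma exists_nodup_chain_aux {α : Type*} {r : α → α → Prop} {a c : α}
    (h : Relation.TransGen r a c) :
    a = c ∨ ∃ l : List α, List.Chain r a l ∧ l.getLast? = some c ∧ (a :: l).Nodup := by
  induction h with
  | single hab =>
    rename_i b
    by_cases hp : a = b
    · exact Or.inl hp
    · exact Or.inr ⟨[b], List.isChain_pair.mpr hab, by simp, by simp [hp]⟩
  | tail hab hbc ih =>
    rename_i b c'
    by_cases hac : a = c'
    · exact Or.inl hac
    refine Or.inr ?_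
    rcases ih with rfl | ⟨l, hch, hlast, hnd⟩
    · exact ⟨[c'], List.isChain_pair.mpr hbc, by simp, by simp [hac]⟩
    by_cases hcl : c' ∈ l
    · rcases List.append_of_mem hcl with ⟨s, t, rfl⟩
      refine ⟨s ++ [c'], (List.isChain_cons_split.mp hch).1, List.getLast?_concat, ?_⟩
      have hsub : (a :: (s ++ [c'])).Sublist (a :: (s ++ c' :: t)) := by
        refine List.Sublist.cons₂ a ?_
        exact List.Sublist.append_left ((List.nil_sublist t).cons₂ c') s
      exact hnd.sublist hsub
    · refine ⟨l ++ [c'], chain_concat' l a b c' hch hlast hbc, List.getLast?_concat, ?_⟩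
      have : (a :: (l ++ [c'])) = (a :: l) ++ [c'] := by simp
      rw [this]
      refine List.Nodup.append hnd (by simp) ?_
      intro x hx hx'
      simp at hx'
      subst hx'
      rcases List.mem_cons.mp hx with h1 | h1
      · exact hac h1.symm
      · exact hcl h1

private lemma exists_nodup_chain {α : Type*} {r : α → α → Prop} {a c : α}
    (h : Relation.TransGen r a c) (hac : a ≠ c) :
    ∃ l : List α, List.Chain r a l ∧ l.getLast? = some c ∧ (a :: l).Nodup :=
  (exists_nodup_chain_aux h).resolve_left hac

private lemma div_scale (η G Dv : ℝ) (hη0 : 0 < η) (h : η / 2 * G ≤ Dv) : G ≤ 2 / η * Dv := by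
  have h2 : (2/η) * (η/2 * G) ≤ (2/η) * Dv := mul_le_mul_of_nonneg_left h (by positivity)
  have h3 : (2/η) * (η/2 * G) = G := by field_simp
  linarith

private lemma combine_bound (U V α T L : ℝ) (hL : 1 ≤ L) (hα : 0 ≤ α) (hT : 0 ≤ T)
    (hU : U ^ 2 ≤ α) (hV : V ^ 2 ≤ L * T) : (U + V) ^ 2 ≤ (L + 1) * (α + T) := by
  have hL0 : (0:ℝ) < L := lt_of_lt_of_le zero_lt_one hL
  have h1 : 2 * (L * U * V) ≤ L ^ 2 * U ^ 2 + V ^ 2 := by nlinarith [sq_nonneg (L * U - V)]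
  have h2 : L * ((U + V) ^ 2) ≤ L * ((L + 1) * (α + T)) := by
    nlinarith [mul_le_mul_of_nonneg_left hU (by positivity : (0:ℝ) ≤ L * (L + 1)),
      mul_le_mul_of_nonneg_left hV (by linarith : (0:ℝ) ≤ L + 1)]
  exact (mul_le_mul_iff_right₀ hL0).mp h2

private lemma edge_bound {N : ℕ} (A : Matrix (Fin N) (Fin N) ℝ) (x y : Fin N → ℝ) (η : ℝ)
    (hη0 : 0 < η) (hdiag : ∀ i, η ≤ A i i) (hpos : ∀ i j, 0 < A i j → η ≤ A i j)
    (hnonneg : ∀ i j, 0 ≤ A i j) (p q : Fin N) (hpq : p ≠ q) (hApq : 0 < A q p) :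
    η / 2 * (x p - x q) ^ 2 ≤ ∑ j, A q j * (x j - y q) ^ 2 := by
  have h1 : ∑ j ∈ ({p, q} : Finset (Fin N)), A q j * (x j - y q) ^ 2
      ≤ ∑ j, A q j * (x j - y q) ^ 2 := by
    refine Finset.sum_le_sum_of_subset_of_nonneg (Finset.subset_univ _) ?_
    intro j _ _
    exact mul_nonneg (hnonneg q j) (sq_nonneg _)
  rw [Finset.sum_pair hpq] at h1
  have h2 : η ≤ A q p := hpos q p hApq
  have h3 : η ≤ A q q := hdiag q
  nlinarith [sq_nonneg ((x p - y q) + (x q - y q)), sq_nonneg (x p - y q), sq_nonneg (x q - y q)]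

private lemma path_bound {N : ℕ} (A : Matrix (Fin N) (Fin N) ℝ) (x y : Fin N → ℝ) (η : ℝ)
    (hη0 : 0 < η) (hdiag : ∀ i, η ≤ A i i) (hpos : ∀ i j, 0 < A i j → η ≤ A i j)
    (hnonneg : ∀ i j, 0 ≤ A i j) :
    ∀ (l : List (Fin N)) (a b : Fin N),
      List.Chain (fun p q : Fin N => p ≠ q ∧ 0 < A q p) a l →
      l.getLast? = some b → (a :: l).Nodup →
      (x a - x b) ^ 2 ≤
        l.length * ((2 / η) * ∑ i ∈ l.toFinset, ∑ j, A i j * (x j - y i) ^ 2)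
  | [], a, b, _, hlast, _ => by simp at hlast
  | [w], a, b, hch, hlast, hnd => by
    have hbw : w = b := by simpa using hlast
    rcases List.chain_cons.mp hch with ⟨⟨hne, hpos'⟩, -⟩
    have he := edge_bound A x y η hη0 hdiag hpos hnonneg a w hne hpos'
    have hD := div_scale η ((x a - x w) ^ 2) _ hη0 he
    rw [← hbw]
    simpa using hD
  | w :: u :: l'', a, b, hch, hlast, hnd => by
    rw [List.getLast?_cons_cons] at hlast
    rcases List.chain_cons.mp hch with ⟨⟨hne, hposaw⟩, hch'⟩
    have hnd' : (w :: u :: l'').Nodup := hnd.of_cons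
    have IH := path_bound A x y η hη0 hdiag hpos hnonneg (u :: l'') w b hch' hlast hnd'
    have hwl : w ∉ (u :: l'') := (List.nodup_cons.mp hnd').1
    have he := edge_bound A x y η hη0 hdiag hpos hnonneg a w hne hposaw
    have hU := div_scale η ((x a - x w) ^ 2) _ hη0 he
    have hDnonneg : ∀ i : Fin N, (0:ℝ) ≤ ∑ j, A i j * (x j - y i) ^ 2 := fun i =>
      Finset.sum_nonneg fun j _ => mul_nonneg (hnonneg i j) (sq_nonneg _)
    have hS0 : (0:ℝ) ≤ ∑ i ∈ (u :: l'').toFinset, ∑ j, A i j * (x j - y i) ^ 2 :=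
      Finset.sum_nonneg fun i _ => hDnonneg i
    have hL1 : (1:ℝ) ≤ ((u :: l'').length : ℝ) := by
      exact_mod_cast Nat.succ_le_of_lt (Nat.pos_of_ne_zero (by simp))
    have hcomb := combine_bound (x a - x w) (x w - x b)
      ((2/η) * ∑ j, A w j * (x j - y w) ^ 2)
      ((2/η) * ∑ i ∈ (u :: l'').toFinset, ∑ j, A i j * (x j - y i) ^ 2)
      ((u :: l'').length : ℝ) hL1
      (mul_nonneg (by positivity) (hDnonneg w))
      (mul_nonneg (by positivity) hS0)
      hU IH
    have hxab : x a - x b = (x a - x w) + (x w - x b) := by ring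
    rw [hxab]
    have hsum : ∑ i ∈ (w :: u :: l'').toFinset, ∑ j, A i j * (x j - y i) ^ 2
        = (∑ j, A w j * (x j - y w) ^ 2)
          + ∑ i ∈ (u :: l'').toFinset, ∑ j, A i j * (x j - y i) ^ 2 := by
      have htf : (w :: u :: l'').toFinset = insert w (u :: l'').toFinset := by simp
      rw [htf, Finset.sum_insert (by simpa using hwl)]
    have hlen : ((w :: u :: l'').length : ℝ) = ((u :: l'').length : ℝ) + 1 := by
      push_cast [List.length_cons]
      ring
    rw [hsum, hlen]
    calc ((x a - x w) + (x w - x b)) ^ 2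
        ≤ (((u :: l'').length : ℝ) + 1) *
            ((2/η) * ∑ j, A w j * (x j - y w) ^ 2
              + (2/η) * ∑ i ∈ (u :: l'').toFinset, ∑ j, A i j * (x j - y i) ^ 2) := hcomb
      _ = (((u :: l'').length : ℝ) + 1) * (2 / η *
            ((∑ j, A w j * (x j - y w) ^ 2)
              + ∑ i ∈ (u :: l'').toFinset, ∑ j, A i j * (x j - y i) ^ 2)) := by ring

private lemma drop_identity {N : ℕ} (A : Matrix (Fin N) (Fin N) ℝ)
    (hrow : ∀ i, ∑ j, A i j = 1) (hcol : ∀ j, ∑ i, A i j = 1) (x : Fin N → ℝ) :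
    ∑ i, ∑ j, A i j * (x j - A.mulVec x i) ^ 2
      = ∑ i, (x i) ^ 2 - ∑ i, (A.mulVec x i) ^ 2 := by
  have hy : ∀ i, ∑ j, A i j * x j = A.mulVec x i := fun i => rfl
  have hrowid : ∀ i, ∑ j, A i j * (x j - A.mulVec x i) ^ 2
      = (∑ j, A i j * (x j) ^ 2) - (A.mulVec x i) ^ 2 := by
    intro i
    have expand : ∀ j, A i j * (x j - A.mulVec x i) ^ 2
        = A i j * (x j) ^ 2 - 2 * A.mulVec x i * (A i j * x j) + (A.mulVec x i) ^ 2 * A i j := by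
      intro j; ring
    rw [Finset.sum_congr rfl fun j _ => expand j]
    rw [Finset.sum_add_distrib, Finset.sum_sub_distrib, ← Finset.mul_sum, ← Finset.mul_sum,
      hy i, hrow i]
    ring
  rw [Finset.sum_congr rfl fun i _ => hrowid i, Finset.sum_sub_distrib]
  congr 1
  rw [Finset.sum_comm]
  refine Finset.sum_congr rfl fun j _ => ?_
  rw [← Finset.sum_mul, hcol j, one_mul]

private lemma contract {N : ℕ} (hN : 1 < N) (A : Matrix (Fin N) (Fin N) ℝ)
    (hnonneg : ∀ i j, 0 ≤ A i j)
    (hrow : ∀ i, ∑ j, A i j = 1) (hcol : ∀ j, ∑ i, A i j = 1)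
    (η : ℝ) (hη0 : 0 < η)
    (hdiag : ∀ i, η ≤ A i i)
    (hpos : ∀ i j, 0 < A i j → η ≤ A i j)
    (hconn : ∀ u v : Fin N, u ≠ v →
      Relation.TransGen (fun a b : Fin N => a ≠ b ∧ 0 < A b a) u v)
    (x : Fin N → ℝ) (hx : ∑ i, x i = 0) :
    ∑ i, (A.mulVec x i) ^ 2 ≤ (1 - η / (2 * (N:ℝ) ^ 2)) * ∑ i, (x i) ^ 2 := by
  have hNpos : (0:ℝ) < N := by positivity
  have hN2 : (2:ℝ) ≤ (N:ℝ) := by exact_mod_cast hN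
  have hne : (Finset.univ : Finset (Fin N)).Nonempty := by
    refine ⟨⟨0, by omega⟩, Finset.mem_univ _⟩
  obtain ⟨a, -, ha⟩ := Finset.exists_max_image Finset.univ x hne
  obtain ⟨b, -, hb⟩ := Finset.exists_min_image Finset.univ x hne
  have ha' : ∀ i, x i ≤ x a := fun i => ha i (Finset.mem_univ i)
  have hb' : ∀ i, x b ≤ x i := fun i => hb i (Finset.mem_univ i)
  have hxa : 0 ≤ x a := by
    by_contra hcon
    push_neg at hcon
    have : ∑ i, x i < ∑ i : Fin N, (0:ℝ) :=
      Finset.sum_lt_sum_of_nonempty hne fun i _ => lt_of_le_of_lt (ha' i) hcon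
    simp [hx] at this
  have hxb : x b ≤ 0 := by
    by_contra hcon
    push_neg at hcon
    have : ∑ i : Fin N, (0:ℝ) < ∑ i, x i :=
      Finset.sum_lt_sum_of_nonempty hne fun i _ => lt_of_lt_of_le hcon (hb' i)
    simp [hx] at this
  by_cases hab : x a = x b
  · -- all entries equal, hence zero
    have hzero : x = 0 := by
      funext i
      have h1 : x i ≤ x a := ha' i
      have h2 : x b ≤ x i := hb' i
      have : x i = 0 := le_antisymm (by linarith) (by linarith [hab ▸ hxa, hxb])
      simpa using this
    rw [hzero]
    simp [Matrix.mulVec_zero]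
  · have haneb : a ≠ b := fun h => hab (by rw [h])
    obtain ⟨l, hch, hlast, hnd⟩ := exists_nodup_chain (hconn a b haneb) haneb
    have hPB := path_bound A x (A.mulVec x) η hη0 hdiag hpos hnonneg l a b hch hlast hnd
    have hDnonneg : ∀ i : Fin N, (0:ℝ) ≤ ∑ j, A i j * (x j - A.mulVec x i) ^ 2 := fun i =>
      Finset.sum_nonneg fun j _ => mul_nonneg (hnonneg i j) (sq_nonneg _)
    have hST : ∑ i ∈ l.toFinset, ∑ j, A i j * (x j - A.mulVec x i) ^ 2
        ≤ ∑ i, ∑ j, A i j * (x j - A.mulVec x i) ^ 2 :=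
      Finset.sum_le_sum_of_subset_of_nonneg (Finset.subset_univ _)
        (fun i _ _ => hDnonneg i)
    have hS0 : (0:ℝ) ≤ ∑ i ∈ l.toFinset, ∑ j, A i j * (x j - A.mulVec x i) ^ 2 :=
      Finset.sum_nonneg fun i _ => hDnonneg i
    have hT := drop_identity A hrow hcol x
    -- length bound
    have hlen : (l.length : ℝ) ≤ (N:ℝ) - 1 := by
      have h1 : (a :: l).length ≤ N := by
        have := List.Nodup.length_le_card hnd
        simpa using this
      have h2 : l.length + 1 ≤ N := by simpa using h1
      have : (l.length : ℝ) + 1 ≤ (N:ℝ) := by exact_mod_cast h2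
      linarith
    have hlpos : l ≠ [] := by
      intro h; rw [h] at hlast; simp at hlast
    have hL1 : (1:ℝ) ≤ (l.length : ℝ) := by
      have := List.length_pos_iff.mpr hlpos
      exact_mod_cast this
    -- sum of squares bounded by N * gap^2
    have hPN : ∑ i, (x i) ^ 2 ≤ (N:ℝ) * (x a - x b) ^ 2 := by
      have h1 : ∀ i, (x i) ^ 2 ≤ (x a - x b) ^ 2 := by
        intro i
        have := ha' i; have := hb' i
        nlinarith
      calc ∑ i, (x i) ^ 2 ≤ ∑ _i : Fin N, (x a - x b) ^ 2 :=
            Finset.sum_le_sum fun i _ => h1 i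
        _ = (N:ℝ) * (x a - x b) ^ 2 := by
            rw [Finset.sum_const, Finset.card_univ, Fintype.card_fin]
            simp [nsmul_eq_mul]
    -- combine everything
    set G : ℝ := (x a - x b) ^ 2 with hGdef
    set S : ℝ := ∑ i ∈ l.toFinset, ∑ j, A i j * (x j - A.mulVec x i) ^ 2 with hSdef
    set P : ℝ := ∑ i, (x i) ^ 2 with hPdef
    set Y : ℝ := ∑ i, (A.mulVec x i) ^ 2 with hYdef
    have hTeq : ∑ i, ∑ j, A i j * (x j - A.mulVec x i) ^ 2 = P - Y := hT
    rw [hTeq] at hST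
    -- from hPB : G ≤ l.length * (2/η * S), get η * G ≤ 2 * l.length * S
    have hG2 : η * G ≤ 2 * ((l.length : ℝ) * S) := by
      have := mul_le_mul_of_nonneg_left hPB hη0.le
      calc η * G ≤ η * ((l.length : ℝ) * (2 / η * S)) := this
        _ = 2 * ((l.length : ℝ) * S) := by field_simp
    -- conclude: η * P ≤ 2 * N^2 * (P - Y)
    have hmain : η * P ≤ 2 * (N:ℝ) ^ 2 * (P - Y) := by
      have e1 : η * P ≤ η * ((N:ℝ) * G) := mul_le_mul_of_nonneg_left hPN hη0.le
      have e2 : (N:ℝ) * (η * G) ≤ (N:ℝ) * (2 * ((l.length : ℝ) * S)) :=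
        mul_le_mul_of_nonneg_left hG2 (by positivity)
      have e3 : (l.length : ℝ) * S ≤ ((N:ℝ) - 1) * S :=
        mul_le_mul_of_nonneg_right hlen hS0
      have e4 : ((N:ℝ) - 1) * S ≤ ((N:ℝ) - 1) * (P - Y) :=
        mul_le_mul_of_nonneg_left hST (by linarith)
      nlinarith [hST, hS0]
    have hP0 : 0 ≤ P := Finset.sum_nonneg fun i _ => sq_nonneg _
    rw [← sub_nonneg]
    have hN2pos : (0:ℝ) < 2 * (N:ℝ) ^ 2 := by positivity
    calc (0:ℝ) ≤ (2 * (N:ℝ) ^ 2 * (P - Y) - η * P) / (2 * (N:ℝ) ^ 2) :=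
          div_nonneg (by linarith) hN2pos.le
      _ = (1 - η / (2 * (N:ℝ) ^ 2)) * P - Y := by field_simp; ring

private lemma rowsum_pow {N : ℕ} (A : Matrix (Fin N) (Fin N) ℝ)
    (hrow : ∀ i, ∑ j, A i j = 1) : ∀ (k : ℕ) (i), ∑ j, (A ^ k) i j = 1 := by
  intro k
  induction k with
  | zero => intro i; simp [Matrix.one_apply]
  | succ k ih =>
    intro i
    rw [pow_succ]
    simp only [Matrix.mul_apply]
    rw [Finset.sum_comm]
    calc ∑ l, ∑ j, (A ^ k) i l * A l j = ∑ l, (A ^ k) i l * ∑ j, A l j := by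
          exact Finset.sum_congr rfl fun l _ => (Finset.mul_sum _ _ _).symm
      _ = ∑ l, (A ^ k) i l := by
          exact Finset.sum_congr rfl fun l _ => by rw [hrow l, mul_one]
      _ = 1 := ih i

theorem stmt_6 {N : ℕ} (hN : 1 < N) (A : Matrix (Fin N) (Fin N) ℝ)
    (hnonneg : ∀ i j, 0 ≤ A i j)
    (hrow : ∀ i, ∑ j, A i j = 1) (hcol : ∀ j, ∑ i, A i j = 1)
    (η : ℝ) (hη0 : 0 < η) (hη1 : η < 1)
    (hdiag : ∀ i, η ≤ A i i)
    (hpos : ∀ i j, 0 < A i j → η ≤ A i j)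
    (hconn : ∀ u v : Fin N, u ≠ v →
      Relation.TransGen (fun a b : Fin N => a ≠ b ∧ 0 < A b a) u v)
    (Q : ℕ)
    (hQ : Q = (Finset.univ.filter
      (fun p : Fin N × Fin N => p.1 ≠ p.2 ∧ 0 < A p.2 p.1)).card) :
    ∀ k : ℕ, 0 < k → ∀ i j,
      |(A ^ k) i j - 1 / (N : ℝ)| ≤
        ((1 - η / (4 * (N : ℝ) ^ 2))⁻¹) ^ 2 *
          ((1 - η / (4 * (N : ℝ) ^ 2)) ^ ((1 : ℝ) / (Q : ℝ))) ^ k := by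
  have hN2 : (2:ℝ) ≤ (N:ℝ) := by exact_mod_cast hN
  have hNpos : (0:ℝ) < (N:ℝ) := by linarith
  set c : ℝ := 1 - η / (4 * (N:ℝ) ^ 2) with hcdef
  have hc0 : 0 < c := by
    have h4 : (16:ℝ) ≤ 4 * (N:ℝ) ^ 2 := by nlinarith
    have : η / (4 * (N:ℝ) ^ 2) < 1 := by
      rw [div_lt_one (by linarith)]
      linarith
    rw [hcdef]; linarith
  have hc1 : c < 1 := by
    have : 0 < η / (4 * (N:ℝ) ^ 2) := by positivity
    rw [hcdef]; linarith
  have hcoef : 1 - η / (2 * (N:ℝ) ^ 2) ≤ c ^ 2 := by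
    have hε : η / (2 * (N:ℝ) ^ 2) = 2 * (η / (4 * (N:ℝ) ^ 2)) := by
      field_simp
      ring
    rw [hcdef, hε]
    nlinarith [sq_nonneg (η / (4 * (N:ℝ) ^ 2))]
  -- the iterated contraction
  have key : ∀ (k : ℕ) (x : Fin N → ℝ), ∑ i, x i = 0 →
      ∑ i, ((A ^ k).mulVec x i) ^ 2 ≤ (c ^ 2) ^ k * ∑ i, (x i) ^ 2 := by
    intro k
    induction k with
    | zero => intro x hx; simp [Matrix.one_mulVec]
    | succ k ih =>
      intro x hx
      have hmean : ∑ i, A.mulVec x i = 0 := by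
        have h1 : ∑ i, A.mulVec x i = ∑ j, (∑ i, A i j) * x j := by
          simp only [Matrix.mulVec, dotProduct]
          rw [Finset.sum_comm]
          exact Finset.sum_congr rfl fun j _ => (Finset.sum_mul _ _ _).symm
        rw [h1]
        calc ∑ j, (∑ i, A i j) * x j = ∑ j, x j := by
              exact Finset.sum_congr rfl fun j _ => by rw [hcol j, one_mul]
          _ = 0 := hx
      have hrw : (A ^ (k+1)).mulVec x = (A ^ k).mulVec (A.mulVec x) := by
        rw [pow_succ, ← Matrix.mulVec_mulVec]
      have hsumsq : (0:ℝ) ≤ ∑ i, (x i) ^ 2 := Finset.sum_nonneg fun i _ => sq_nonneg _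
      have hpk : (0:ℝ) ≤ (c ^ 2) ^ k := by positivity
      calc ∑ i, ((A ^ (k+1)).mulVec x i) ^ 2
          = ∑ i, ((A ^ k).mulVec (A.mulVec x) i) ^ 2 := by rw [hrw]
        _ ≤ (c ^ 2) ^ k * ∑ i, (A.mulVec x i) ^ 2 := ih (A.mulVec x) hmean
        _ ≤ (c ^ 2) ^ k * ((1 - η / (2 * (N:ℝ) ^ 2)) * ∑ i, (x i) ^ 2) :=
            mul_le_mul_of_nonneg_left
              (contract hN A hnonneg hrow hcol η hη0 hdiag hpos hconn x hx) hpk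
        _ ≤ (c ^ 2) ^ k * (c ^ 2 * ∑ i, (x i) ^ 2) :=
            mul_le_mul_of_nonneg_left (mul_le_mul_of_nonneg_right hcoef hsumsq) hpk
        _ = (c ^ 2) ^ (k+1) * ∑ i, (x i) ^ 2 := by ring
  intro k hk i j
  set x : Fin N → ℝ := fun t => (if t = j then (1:ℝ) else 0) - 1 / (N:ℝ) with hxdef
  have hNne : (N:ℝ) ≠ 0 := ne_of_gt hNpos
  have hxsum : ∑ t, x t = 0 := by
    rw [hxdef]
    rw [Finset.sum_sub_distrib]
    simp [Finset.sum_const, Finset.card_univ]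
    field_simp
    norm_num
  have hxsq : ∑ t, (x t) ^ 2 ≤ 1 := by
    have hterm : ∀ t, (x t) ^ 2 = (if t = j then (1:ℝ) else 0) * (1 - 2/(N:ℝ)) + 1/(N:ℝ)^2 := by
      intro t
      rw [hxdef]
      by_cases h : t = j <;> simp [h] <;> field_simp <;> ring
    rw [Finset.sum_congr rfl fun t _ => hterm t, Finset.sum_add_distrib, ← Finset.sum_mul]
    have h1 : ∑ t : Fin N, (if t = j then (1:ℝ) else 0) = 1 := by simp
    rw [h1, one_mul]
    rw [Finset.sum_const, Finset.card_univ, Fintype.card_fin, nsmul_eq_mul]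
    have h2 : (N:ℝ) * (1/(N:ℝ)^2) = 1/(N:ℝ) := by field_simp
    rw [h2]
    have h3 : 1/(N:ℝ) ≤ 2/(N:ℝ) := by
      apply div_le_div_of_nonneg_right <;> linarith
    linarith
  have happ : (A ^ k).mulVec x i = (A ^ k) i j - 1/(N:ℝ) := by
    rw [hxdef]
    simp only [Matrix.mulVec, dotProduct, mul_sub]
    rw [Finset.sum_sub_distrib]
    congr 1
    · simp [mul_ite]
    · rw [← Finset.sum_mul, rowsum_pow A hrow k i, one_mul]
  have hsq : ((A ^ k) i j - 1/(N:ℝ)) ^ 2 ≤ (c ^ k) ^ 2 := by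
    have h1 : ((A ^ k).mulVec x i) ^ 2 ≤ ∑ i', ((A ^ k).mulVec x i') ^ 2 :=
      Finset.single_le_sum (f := fun i' => ((A ^ k).mulVec x i') ^ 2)
        (fun i' _ => sq_nonneg _) (Finset.mem_univ i)
    have h2 := key k x hxsum
    have h3 : (c ^ 2) ^ k * ∑ t, (x t) ^ 2 ≤ (c ^ 2) ^ k * 1 :=
      mul_le_mul_of_nonneg_left hxsq (by positivity)
    have h4 : (c ^ 2) ^ k = (c ^ k) ^ 2 := by
      rw [← pow_mul, ← pow_mul, Nat.mul_comm]
    rw [← happ]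
    calc ((A ^ k).mulVec x i) ^ 2 ≤ (c ^ 2) ^ k * 1 := le_trans h1 (le_trans h2 h3)
      _ = (c ^ k) ^ 2 := by rw [h4, mul_one]
  have habs : |(A ^ k) i j - 1/(N:ℝ)| ≤ c ^ k :=
    abs_le_of_sq_le_sq hsq (pow_nonneg hc0.le k)
  have hQle : (k:ℝ)/(Q:ℝ) - 2 ≤ (k:ℝ) := by
    have h1 : (k:ℝ)/(Q:ℝ) ≤ (k:ℝ) := by
      rcases Nat.eq_zero_or_pos Q with hq | hq
      · rw [hq]
        simp
      · exact div_le_self (by positivity) (by exact_mod_cast hq)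
    linarith
  have hRHS : (c⁻¹) ^ 2 * (c ^ ((1:ℝ)/(Q:ℝ))) ^ k = c ^ ((k:ℝ)/(Q:ℝ) - 2) := by
    rw [← Real.rpow_natCast (c ^ ((1:ℝ)/(Q:ℝ))) k, ← Real.rpow_mul hc0.le,
      ← Real.rpow_neg_one c, ← Real.rpow_natCast (c ^ (-1:ℝ)) 2, ← Real.rpow_mul hc0.le,
      ← Real.rpow_add hc0]
    congr 1
    push_cast
    ring
  calc |(A ^ k) i j - 1/(N:ℝ)| ≤ c ^ k := habs
    _ = c ^ ((k:ℕ):ℝ) := (Real.rpow_natCast c k).symm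
    _ ≤ c ^ ((k:ℝ)/(Q:ℝ) - 2) := Real.rpow_le_rpow_of_exponent_ge hc0 hc1.le hQle
    _ = (c⁻¹) ^ 2 * (c ^ ((1:ℝ)/(Q:ℝ))) ^ k := hRHS.symm
end

section
/- Let Ω ⊆ ℝⁿ be a nonempty closed convex set, let f: ℝⁿ → ℝ be differentiable and strongly convex with modulus μ > 0 on Ω, let v, z ∈ Ω, let α ≥ 0 and τ ≥ 0, and let ĝ ∈ ℝⁿ satisfy ‖ĝ‖ ≤ τ. Set b = ĝ − ∇f(v). Then ‖P_Ω[v − α ĝ] − z‖² ≤ (1 − μα)‖v − z‖² − 2α( f(v) − f(z) ) − 2α ⟨b, v − z⟩ + α² τ². -/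
theorem stmt_8 {n : ℕ} (Ω : Set (EuclideanSpace ℝ (Fin n)))
    (hne : Ω.Nonempty) (hclosed : IsClosed Ω) (hconv : Convex ℝ Ω)
    (f : EuclideanSpace ℝ (Fin n) → ℝ) (f' : EuclideanSpace ℝ (Fin n) → EuclideanSpace ℝ (Fin n))
    (hdiff : ∀ x, HasGradientAt f (f' x) x)
    (μ : ℝ) (hμ : 0 < μ)
    (hsc : ∀ z₁ ∈ Ω, ∀ z₂ ∈ Ω,
      μ * ‖z₁ - z₂‖ ^ 2 ≤ f z₂ - f z₁ - (inner ℝ (f' z₁) (z₂ - z₁) : ℝ))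
    (v z : EuclideanSpace ℝ (Fin n)) (hv : v ∈ Ω) (hz : z ∈ Ω)
    (α τ : ℝ) (hα : 0 ≤ α) (hτ : 0 ≤ τ)
    (ghat : EuclideanSpace ℝ (Fin n)) (hghat : ‖ghat‖ ≤ τ)
    (p : EuclideanSpace ℝ (Fin n)) (hp : p ∈ Ω)
    (hproj : ∀ w ∈ Ω, ‖v - α • ghat - p‖ ≤ ‖v - α • ghat - w‖) :
    ‖p - z‖ ^ 2 ≤ (1 - μ * α) * ‖v - z‖ ^ 2 - 2 * α * (f v - f z)
      - 2 * α * (inner ℝ (ghat - f' v) (v - z) : ℝ) + α ^ 2 * τ ^ 2 := by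
  set u := v - α • ghat with hu
  -- variational inequality
  haveI : Nonempty Ω := hne.to_subtype
  have heq : ‖u - p‖ = ⨅ w : Ω, ‖u - w‖ := by
    apply le_antisymm
    · exact le_ciInf fun w => hproj w w.2
    · exact ciInf_le ⟨0, fun x ⟨w, hw⟩ => hw ▸ norm_nonneg _⟩ (⟨p, hp⟩ : Ω)
  have hvar : (inner ℝ (u - p) (z - p) : ℝ) ≤ 0 :=
    ((norm_eq_iInf_iff_real_inner_le_zero hconv hp).mp heq) z hz
  have h1 : ‖p - z‖ ^ 2 ≤ ‖u - z‖ ^ 2 := by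
    have h2 : u - z = (u - p) + (p - z) := by abel
    have h3 : ‖(u - p) + (p - z)‖ ^ 2
        = ‖u - p‖ ^ 2 + 2 * (inner ℝ (u - p) (p - z) : ℝ) + ‖p - z‖ ^ 2 := by
      rw [norm_add_sq_real]
    have h4 : (inner ℝ (u - p) (p - z) : ℝ) = -(inner ℝ (u - p) (z - p) : ℝ) := by
      rw [← inner_neg_right]; congr 1; abel
    rw [h2, h3, h4]
    nlinarith [sq_nonneg ‖u - p‖]
  have hexp : ‖u - z‖ ^ 2 = ‖v - z‖ ^ 2 - 2 * α * (inner ℝ ghat (v - z) : ℝ)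
      + α ^ 2 * ‖ghat‖ ^ 2 := by
    have h2 : u - z = (v - z) - α • ghat := by rw [hu]; abel
    rw [h2, norm_sub_sq_real, inner_smul_right, norm_smul, real_inner_comm]
    simp [mul_pow]
    ring
  have hs := hsc v hv z hz
  have hlin : (inner ℝ (ghat - f' v) (v - z) : ℝ)
      = (inner ℝ ghat (v - z) : ℝ) - (inner ℝ (f' v) (v - z) : ℝ) := by
    rw [inner_sub_left]
  have hneg : (inner ℝ (f' v) (z - v) : ℝ) = -(inner ℝ (f' v) (v - z) : ℝ) := by
    rw [← inner_neg_right]; congr 1; abel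
  rw [hneg] at hs
  have hg : ‖ghat‖ ^ 2 ≤ τ ^ 2 := by nlinarith [norm_nonneg ghat]
  nlinarith [mul_le_mul_of_nonneg_left hg (sq_nonneg α),
    mul_le_mul_of_nonneg_left hs (by linarith : (0:ℝ) ≤ 2 * α),
    mul_nonneg (mul_nonneg hμ.le hα) (sq_nonneg ‖v - z‖)]
end

section
/- Let A = (a_{ij}) be an N×N doubly stochastic matrix, let θ ≥ 0 and 0 < β < 1 be constants such that |[A^k]_{ij} − 1/N| ≤ θ β^k for every integer k > 0 and all i, j. Let (x_{i,k})_{k≥0} (i = 1,…,N) be sequences in ℝⁿ and (p_{i,k})_{k≥1} be vectors in ℝⁿ satisfying the recursion x_{i,k+1} = Σ_{j=1}^N a_{ij} x_{j,k} + p_{i,k+1} for all i and k ≥ 0. Suppose ‖x_{j,0}‖ ≤ C₁ for all j and ‖p_{j,ℓ}‖ ≤ c_{ℓ−1} for all j and all ℓ ≥ 1, where C₁ ≥ 0 and (c_k)_{k≥0} is a nonnegative sequence. Define y_k = (1/N) Σ_{i=1}^N x_{i,k}. Then for every k ≥ 0 and every i: ‖ y_{k+1} − x_{i,k+1} ‖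 ≤ N θ C₁ β^{k+1} + N θ Σ_{ℓ=1}^{k} β^{k+1−ℓ} c_{ℓ−1} + 2 c_k. -/
theorem stmt_11 {N n : ℕ} (A : Matrix (Fin N) (Fin N) ℝ)
    (hnonneg : ∀ i j, 0 ≤ A i j)
    (hrow : ∀ i, ∑ j, A i j = 1) (hcol : ∀ j, ∑ i, A i j = 1)
    (θ : ℝ) (hθ : 0 ≤ θ) (β : ℝ) (hβ0 : 0 < β) (hβ1 : β < 1)
    (hmix : ∀ k : ℕ, 0 < k → ∀ i j, |(A ^ k) i j - 1 / (N : ℝ)| ≤ θ * β ^ k)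
    (x : Fin N → ℕ → EuclideanSpace ℝ (Fin n))
    (p : Fin N → ℕ → EuclideanSpace ℝ (Fin n))
    (hrec : ∀ i k, x i (k + 1) = (∑ j, A i j • x j k) + p i (k + 1))
    (C₁ : ℝ) (hC₁ : 0 ≤ C₁) (hx0 : ∀ j, ‖x j 0‖ ≤ C₁)
    (c : ℕ → ℝ) (hc : ∀ k, 0 ≤ c k)
    (hp : ∀ j, ∀ ℓ : ℕ, 1 ≤ ℓ → ‖p j ℓ‖ ≤ c (ℓ - 1))
    (y : ℕ → EuclideanSpace ℝ (Fin n))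
    (hy : ∀ k, y k = (1 / (N : ℝ)) • ∑ i, x i k) :
    ∀ (k : ℕ) (i : Fin N),
      ‖y (k + 1) - x i (k + 1)‖ ≤
        N * θ * C₁ * β ^ (k + 1) +
          N * θ * (∑ ℓ ∈ Finset.Icc 1 k, β ^ (k + 1 - ℓ) * c (ℓ - 1)) + 2 * c k := by
  intro k i
  have hN : 0 < N := i.pos
  have hNR : (0:ℝ) < N := by exact_mod_cast hN
  -- column sums of powers of A are 1
  have hcolpow : ∀ m : ℕ, ∀ j, ∑ i', (A ^ m) i' j = 1 := by
    intro m
    induction m with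
    | zero =>
      intro j
      simp [Matrix.one_apply]
    | succ m ih =>
      intro j
      rw [pow_succ]
      simp only [Matrix.mul_apply]
      rw [Finset.sum_comm]
      have : ∀ l, ∑ i', (A ^ m) i' l * A l j = A l j := by
        intro l
        rw [← Finset.sum_mul, ih l, one_mul]
      rw [Finset.sum_congr rfl (fun l _ => this l), hcol j]
  -- closed form for x
  have hclosed : ∀ m : ℕ, ∀ i', x i' m =
      (∑ j, (A ^ m) i' j • x j 0) +
        ∑ ℓ ∈ Finset.Icc 1 m, ∑ j, (A ^ (m - ℓ)) i' j • p j ℓ := by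
    intro m
    induction m with
    | zero =>
      intro i'
      simp [Matrix.one_apply]
    | succ m ih =>
      intro i'
      rw [hrec i' m]
      have hsub : ∀ j, A i' j • x j m =
          (∑ l, (A i' j * (A ^ m) j l) • x l 0) +
            ∑ ℓ ∈ Finset.Icc 1 m, ∑ l, (A i' j * (A ^ (m - ℓ)) j l) • p l ℓ := by
        intro j
        rw [ih j, smul_add, Finset.smul_sum, Finset.smul_sum]
        congr 1
        · exact Finset.sum_congr rfl fun l _ => (smul_smul _ _ _)
        · refine Finset.sum_congr rfl fun ℓ _ => ?_
          rw [Finset.smul_sum]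
          exact Finset.sum_congr rfl fun l _ => (smul_smul _ _ _)
      rw [Finset.sum_congr rfl (fun j _ => hsub j), Finset.sum_add_distrib]
      have h1 : (∑ j, ∑ l, (A i' j * (A ^ m) j l) • x l 0) =
          ∑ l, (A ^ (m+1)) i' l • x l 0 := by
        rw [Finset.sum_comm]
        refine Finset.sum_congr rfl fun l _ => ?_
        rw [← Finset.sum_smul]
        congr 1
        rw [pow_succ', Matrix.mul_apply]
      have h2 : (∑ j, ∑ ℓ ∈ Finset.Icc 1 m, ∑ l, (A i' j * (A ^ (m - ℓ)) j l) • p l ℓ) =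
          ∑ ℓ ∈ Finset.Icc 1 m, ∑ l, (A ^ (m + 1 - ℓ)) i' l • p l ℓ := by
        rw [Finset.sum_comm]
        refine Finset.sum_congr rfl fun ℓ hℓ => ?_
        rw [Finset.sum_comm]
        refine Finset.sum_congr rfl fun l _ => ?_
        rw [← Finset.sum_smul]
        congr 1
        have hℓ' : ℓ ≤ m := (Finset.mem_Icc.mp hℓ).2
        have : m + 1 - ℓ = (m - ℓ) + 1 := by omega
        rw [this, pow_succ', Matrix.mul_apply]
      rw [h1, h2]
      have hIcc : Finset.Icc 1 (m+1) = insert (m+1) (Finset.Icc 1 m) := by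
        ext a; simp [Finset.mem_Icc]; omega
      rw [hIcc, Finset.sum_insert (by simp)]
      have h3 : (∑ l, (A ^ (m + 1 - (m+1))) i' l • p l (m+1)) = p i' (m+1) := by
        simp [Matrix.one_apply]
      rw [h3]
      abel
  -- closed form for y
  have hyclosed : ∀ m : ℕ, y m =
      (∑ j, (1 / (N:ℝ)) • x j 0) +
        ∑ ℓ ∈ Finset.Icc 1 m, ∑ j, (1 / (N:ℝ)) • p j ℓ := by
    intro m
    rw [hy m]
    rw [Finset.sum_congr rfl (fun i' _ => hclosed m i'), Finset.sum_add_distrib, smul_add]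
    congr 1
    · simp only [Finset.smul_sum, smul_smul]
      rw [Finset.sum_comm]
      refine Finset.sum_congr rfl fun j _ => ?_
      rw [← Finset.sum_smul, ← Finset.mul_sum, hcolpow m j, mul_one]
    · simp only [Finset.smul_sum, smul_smul]
      rw [Finset.sum_comm]
      refine Finset.sum_congr rfl fun ℓ _ => ?_
      rw [Finset.sum_comm]
      refine Finset.sum_congr rfl fun j _ => ?_
      rw [← Finset.sum_smul, ← Finset.mul_sum, hcolpow (m - ℓ) j, mul_one]
  -- the difference
  have hdiff : y (k+1) - x i (k+1) =
      (∑ j, ((1 / (N:ℝ)) - (A ^ (k+1)) i j) • x j 0) +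
        (∑ ℓ ∈ Finset.Icc 1 k, ∑ j, ((1 / (N:ℝ)) - (A ^ (k + 1 - ℓ)) i j) • p j ℓ) +
        (((∑ j, (1 / (N:ℝ)) • p j (k+1)) - p i (k+1))) := by
    rw [hyclosed (k+1), hclosed (k+1) i]
    have hIcc : Finset.Icc 1 (k+1) = insert (k+1) (Finset.Icc 1 k) := by
      ext a; simp [Finset.mem_Icc]; omega
    rw [hIcc, Finset.sum_insert (by simp), Finset.sum_insert (by simp)]
    have h3 : (∑ l, (A ^ (k + 1 - (k+1))) i l • p l (k+1)) = p i (k+1) := by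
      simp [Matrix.one_apply]
    rw [h3]
    have e1 : (∑ j, ((1 / (N:ℝ)) - (A ^ (k+1)) i j) • x j 0) =
        (∑ j, (1 / (N:ℝ)) • x j 0) - ∑ j, (A ^ (k+1)) i j • x j 0 := by
      rw [← Finset.sum_sub_distrib]
      exact Finset.sum_congr rfl fun j _ => sub_smul _ _ _
    have e2 : (∑ ℓ ∈ Finset.Icc 1 k, ∑ j, ((1 / (N:ℝ)) - (A ^ (k + 1 - ℓ)) i j) • p j ℓ) =
        (∑ ℓ ∈ Finset.Icc 1 k, ∑ j, (1 / (N:ℝ)) • p j ℓ) -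
          ∑ ℓ ∈ Finset.Icc 1 k, ∑ j, (A ^ (k + 1 - ℓ)) i j • p j ℓ := by
      rw [← Finset.sum_sub_distrib]
      refine Finset.sum_congr rfl fun ℓ _ => ?_
      rw [← Finset.sum_sub_distrib]
      exact Finset.sum_congr rfl fun j _ => sub_smul _ _ _
    rw [e1, e2]
    abel
  rw [hdiff]
  -- bound the three pieces
  have b1 : ‖∑ j, ((1 / (N:ℝ)) - (A ^ (k+1)) i j) • x j 0‖ ≤ N * θ * C₁ * β ^ (k+1) := by
    calc ‖∑ j, ((1 / (N:ℝ)) - (A ^ (k+1)) i j) • x j 0‖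
        ≤ ∑ j, ‖((1 / (N:ℝ)) - (A ^ (k+1)) i j) • x j 0‖ := norm_sum_le _ _
      _ ≤ ∑ _j : Fin N, θ * β ^ (k+1) * C₁ := by
          refine Finset.sum_le_sum fun j _ => ?_
          rw [norm_smul, Real.norm_eq_abs]
          have h1 : |(1 / (N:ℝ)) - (A ^ (k+1)) i j| ≤ θ * β ^ (k+1) := by
            rw [abs_sub_comm]
            exact hmix (k+1) (by omega) i j
          exact mul_le_mul h1 (hx0 j) (norm_nonneg _)
            (by positivity)
      _ = N * θ * C₁ * β ^ (k+1) := by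
          rw [Finset.sum_const, Finset.card_univ, Fintype.card_fin, nsmul_eq_mul]
          ring
  have b2 : ‖∑ ℓ ∈ Finset.Icc 1 k, ∑ j, ((1 / (N:ℝ)) - (A ^ (k + 1 - ℓ)) i j) • p j ℓ‖ ≤
      N * θ * (∑ ℓ ∈ Finset.Icc 1 k, β ^ (k + 1 - ℓ) * c (ℓ - 1)) := by
    calc ‖∑ ℓ ∈ Finset.Icc 1 k, ∑ j, ((1 / (N:ℝ)) - (A ^ (k + 1 - ℓ)) i j) • p j ℓ‖
        ≤ ∑ ℓ ∈ Finset.Icc 1 k, ‖∑ j, ((1 / (N:ℝ)) - (A ^ (k + 1 - ℓ)) i j) • p j ℓ‖ :=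
          norm_sum_le _ _
      _ ≤ ∑ ℓ ∈ Finset.Icc 1 k, N * θ * (β ^ (k + 1 - ℓ) * c (ℓ - 1)) := by
          refine Finset.sum_le_sum fun ℓ hℓ => ?_
          obtain ⟨hℓ1, hℓ2⟩ := Finset.mem_Icc.mp hℓ
          calc ‖∑ j, ((1 / (N:ℝ)) - (A ^ (k + 1 - ℓ)) i j) • p j ℓ‖
              ≤ ∑ j, ‖((1 / (N:ℝ)) - (A ^ (k + 1 - ℓ)) i j) • p j ℓ‖ := norm_sum_le _ _
            _ ≤ ∑ _j : Fin N, θ * β ^ (k + 1 - ℓ) * c (ℓ - 1) := by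
                refine Finset.sum_le_sum fun j _ => ?_
                rw [norm_smul, Real.norm_eq_abs]
                have h1 : |(1 / (N:ℝ)) - (A ^ (k + 1 - ℓ)) i j| ≤ θ * β ^ (k + 1 - ℓ) := by
                  rw [abs_sub_comm]
                  exact hmix (k + 1 - ℓ) (by omega) i j
                exact mul_le_mul h1 (hp j ℓ hℓ1) (norm_nonneg _) (by positivity)
            _ = N * θ * (β ^ (k + 1 - ℓ) * c (ℓ - 1)) := by
                rw [Finset.sum_const, Finset.card_univ, Fintype.card_fin, nsmul_eq_mul]
                ring
      _ = N * θ * (∑ ℓ ∈ Finset.Icc 1 k, β ^ (k + 1 - ℓ) * c (ℓ - 1)) := by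
          rw [Finset.mul_sum]
  have b3 : ‖(∑ j, (1 / (N:ℝ)) • p j (k+1)) - p i (k+1)‖ ≤ 2 * c k := by
    have hpk : ∀ j, ‖p j (k+1)‖ ≤ c k := by
      intro j
      have := hp j (k+1) (by omega)
      simpa using this
    calc ‖(∑ j, (1 / (N:ℝ)) • p j (k+1)) - p i (k+1)‖
        ≤ ‖∑ j, (1 / (N:ℝ)) • p j (k+1)‖ + ‖p i (k+1)‖ := norm_sub_le _ _
      _ ≤ (∑ _j : Fin N, (1 / (N:ℝ)) * c k) + c k := by
          refine add_le_add (le_trans (norm_sum_le _ _) (Finset.sum_le_sum fun j _ => ?_))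
            (hpk i)
          rw [norm_smul, Real.norm_eq_abs, abs_of_pos (by positivity)]
          exact mul_le_mul_of_nonneg_left (hpk j) (by positivity)
      _ = 2 * c k := by
          rw [Finset.sum_const, Finset.card_univ, Fintype.card_fin, nsmul_eq_mul]
          field_simp
          ring
  calc ‖_ + _ + _‖ ≤ ‖(∑ j, ((1 / (N:ℝ)) - (A ^ (k+1)) i j) • x j 0) +
        (∑ ℓ ∈ Finset.Icc 1 k, ∑ j, ((1 / (N:ℝ)) - (A ^ (k + 1 - ℓ)) i j) • p j ℓ)‖ +
        ‖(∑ j, (1 / (N:ℝ)) • p j (k+1)) - p i (k+1)‖ := norm_add_le _ _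
    _ ≤ (‖∑ j, ((1 / (N:ℝ)) - (A ^ (k+1)) i j) • x j 0‖ +
        ‖∑ ℓ ∈ Finset.Icc 1 k, ∑ j, ((1 / (N:ℝ)) - (A ^ (k + 1 - ℓ)) i j) • p j ℓ‖) +
        ‖(∑ j, (1 / (N:ℝ)) • p j (k+1)) - p i (k+1)‖ :=
        add_le_add (norm_add_le _ _) le_rfl
    _ ≤ N * θ * C₁ * β ^ (k + 1) +
          N * θ * (∑ ℓ ∈ Finset.Icc 1 k, β ^ (k + 1 - ℓ) * c (ℓ - 1)) + 2 * c k := by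
        exact add_le_add (add_le_add b1 b2) b3
end
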